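/- Let Y be a metric space and (X, 𝒜, ν) a probability space. Let V be a map assigning to each x ∈ X an open subset V_x ⊆ Y, and for y ∈ Y set W_y = {x ∈ X : y ∈ V_x}. Assume W_y is 𝒜-measurable for every y ∈ Y. Then for every η ≥ 0 the set J_η = {y ∈ Y : ν(W_y) > η} is open in Y. -/

import Mathlib

open MeasureTheory
open scoped ENNReal

/-- Lemma `sample2measure`: if `V x ⊆ Y` is open for every `x` and
`W y = {x | y ∈ V x}` is measurable for every `y`, then for every `η ≥ 0`
the set `J_η = {y | ν (W y) > η}` is open. -/
theorem isOpen_measure_gt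
    {Y X : Type*} [MetricSpace Y] [MeasurableSpace X]
    (ν : Measure X) [IsProbabilityMeasure ν]
    (V : X → Set Y) (hV : ∀ x, IsOpen (V x))
    (hW : ∀ y : Y, MeasurableSet {x : X | y ∈ V x})
    (η : ℝ≥0∞) :
    IsOpen {y : Y | η < ν {x : X | y ∈ V x}} := by
  rw [← isClosed_compl_iff]
  have hcompl : {y : Y | η < ν {x : X | y ∈ V x}}ᶜ
      = {y : Y | ν {x : X | y ∈ V x} ≤ η} := by
    ext y; simp [not_lt]
  rw [hcompl]
  apply IsSeqClosed.isClosed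
  intro ys y hys hlim
  -- show ν (W y) ≤ η
  have hsub : {x : X | y ∈ V x} ⊆ ⋃ n : ℕ, ⋂ i ∈ Set.Ici n, {x : X | ys i ∈ V x} := by
    intro x hx
    have : ∀ᶠ n in Filter.atTop, ys n ∈ V x :=
      hlim.eventually ((hV x).eventually_mem hx)
    obtain ⟨n, hn⟩ := this.exists_forall_of_atTop
    exact Set.mem_iUnion.2 ⟨n, Set.mem_iInter₂.2 fun i hi => hn i hi⟩
  calc ν {x : X | y ∈ V x}
      ≤ ν (⋃ n : ℕ, ⋂ i ∈ Set.Ici n, {x : X | ys i ∈ V x}) := measure_mono hsub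
    _ = ⨆ n : ℕ, ν (⋂ i ∈ Set.Ici n, {x : X | ys i ∈ V x}) := by
        apply Directed.measure_iUnion
        apply Monotone.directed_le
        intro m n hmn
        exact Set.biInter_subset_biInter_left (Set.Ici_subset_Ici.2 hmn)
    _ ≤ η := by
        apply iSup_le
        intro n
        calc ν (⋂ i ∈ Set.Ici n, {x : X | ys i ∈ V x})
            ≤ ν {x : X | ys n ∈ V x} :=
              measure_mono (Set.biInter_subset_of_mem (Set.mem_Ici.2 le_rfl))
          _ ≤ η := hys n
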